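/- arXiv:1601.06723 — 2 statements merged into one kernel-verified Lean document; each statement's English description precedes it below -/
import Mathlib

section
/- The matrix geometric mean is congruence invariant: for positive definite A, B and invertible C, C* G(A,B) C = G(C* A C, C* B C). -/
open Matrix
open scoped ComplexOrder Classical

/-- Square root of a positive semidefinite matrix, extended by `0`. -/
noncomputable def msqrt {n : Type*} [Fintype n] [DecidableEq n] (A : Matrix n n ℂ) :
    Matrix n n ℂ :=
  if h : A.PosSemidef then
    (h.1.eigenvectorUnitary : Matrix n n ℂ) * diagonal ((↑) ∘ Real.sqrt ∘ h.1.eigenvalues) *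
      (star h.1.eigenvectorUnitary : Matrix n n ℂ)
  else 0

/-- Real power of a Hermitian matrix via the functional calculus, extended by `0`. -/
noncomputable def mrpow {n : Type*} [Fintype n] [DecidableEq n] (A : Matrix n n ℂ) (α : ℝ) :
    Matrix n n ℂ :=
  if h : A.IsHermitian then h.cfc (fun t => t ^ α) else 0

/-- A completely positive linear map between matrix algebras (Choi–Kraus form). -/
def IsCPMap {n m : Type*} [Fintype n] [Fintype m] (Φ : Matrix n n ℂ → Matrix m m ℂ) : Prop :=
  ∃ (r : ℕ) (C : Fin r → Matrix n m ℂ), ∀ X, Φ X = ∑ i, (C i)ᴴ * X * C i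

/-- The matrix geometric mean `A^{1/2} (A^{-1/2} B A^{-1/2})^{1/2} A^{1/2}`. -/
noncomputable def geomMean {n : Type*} [Fintype n] [DecidableEq n] (A B : Matrix n n ℂ) :
    Matrix n n ℂ :=
  msqrt A * msqrt ((msqrt A)⁻¹ * B * (msqrt A)⁻¹) * msqrt A

/-- The weighted geometric mean `B^{1/2} (B^{-1/2} A B^{-1/2})^α B^{1/2}`. -/
noncomputable def wgeomMean {n : Type*} [Fintype n] [DecidableEq n] (α : ℝ)
    (A B : Matrix n n ℂ) : Matrix n n ℂ :=
  msqrt B * mrpow ((msqrt B)⁻¹ * A * (msqrt B)⁻¹) α * msqrt B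

/-- The harmonic mean `2 (A⁻¹ + B⁻¹)⁻¹`. -/
noncomputable def harmMean {n : Type*} [Fintype n] [DecidableEq n] (A B : Matrix n n ℂ) :
    Matrix n n ℂ :=
  (2 : ℂ) • (A⁻¹ + B⁻¹)⁻¹

section Helpers

variable {n : Type*} [Fintype n] [DecidableEq n]

open scoped MatrixOrder

lemma posDef_conj_of_isUnit {A C : Matrix n n ℂ} (hA : A.PosDef) (hC : IsUnit C) :
    (Cᴴ * A * C).PosDef := by
  have hps : (Cᴴ * A * C).PosSemidef := hA.posSemidef.conjTranspose_mul_mul_same C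
  refine posDef_iff_dotProduct_mulVec.mpr ⟨hps.1, fun x hx => ?_⟩
  have hdet : IsUnit C.det := (Matrix.isUnit_iff_isUnit_det C).mp hC
  have hCx : C *ᵥ x ≠ 0 := by
    intro h
    apply hx
    have := congrArg (fun v => C⁻¹ *ᵥ v) h
    simpa [Matrix.mulVec_mulVec, Matrix.nonsing_inv_mul C hdet] using this
  have key : (Cᴴ * A * C) *ᵥ x = Cᴴ *ᵥ (A *ᵥ (C *ᵥ x)) := by
    simp [Matrix.mulVec_mulVec, Matrix.mul_assoc]
  rw [key, dotProduct_mulVec, ← star_mulVec]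
  exact hA.dotProduct_mulVec_pos hCx

lemma posSemidef_posDef_of_isUnit {A : Matrix n n ℂ} (hA : A.PosSemidef) (h : IsUnit A) :
    A.PosDef := by
  refine posDef_iff_dotProduct_mulVec.mpr
    ⟨hA.1, fun x hx => lt_of_le_of_ne (hA.dotProduct_mulVec_nonneg x) fun h0 => hx ?_⟩
  have h1 : A *ᵥ x = 0 := (hA.dotProduct_mulVec_zero_iff x).mp h0.symm
  have hinj : Function.Injective A.mulVec := Matrix.mulVec_injective_iff_isUnit.mpr h
  exact hinj (h1.trans (Matrix.mulVec_zero A).symm)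

lemma msqrt_of_posSemidef {A : Matrix n n ℂ} (hA : A.PosSemidef) : msqrt A = CFC.sqrt A := by
  rw [CFC.sqrt_eq_cfc, cfc_nnreal_eq_real _ A hA.nonneg, hA.1.cfc_eq]
  simp only [msqrt, dif_pos hA, IsHermitian.cfc, Unitary.conjStarAlgAut_apply]
  congr 3
  funext i
  simp only [Function.comp_apply]
  rw [Real.sqrt]
  rfl

lemma msqrt_of_posDef {A : Matrix n n ℂ} (hA : A.PosDef) :
    msqrt A = CFC.sqrt A := msqrt_of_posSemidef hA.posSemidef

lemma msqrt_mul_self {A : Matrix n n ℂ} (hA : A.PosDef) : msqrt A * msqrt A = A := by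
  rw [msqrt_of_posDef hA]; exact CFC.sqrt_mul_sqrt_self A hA.posSemidef.nonneg

lemma msqrt_posDef {A : Matrix n n ℂ} (hA : A.PosDef) : (msqrt A).PosDef := by
  have hps : (msqrt A).PosSemidef := msqrt_of_posDef hA ▸ (CFC.sqrt_nonneg A).posSemidef
  refine posSemidef_posDef_of_isUnit hps ?_
  rw [Matrix.isUnit_iff_isUnit_det]
  have : (msqrt A).det * (msqrt A).det = A.det := by
    rw [← Matrix.det_mul, msqrt_mul_self hA]
  exact isUnit_of_mul_isUnit_left (this ▸ hA.det_pos.ne'.isUnit)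

/-- Key uniqueness: the geometric mean is the unique psd solution of `X A⁻¹ X = B`. -/
lemma eq_geomMean {A B X : Matrix n n ℂ} (hA : A.PosDef) (hB : B.PosDef)
    (hX : X.PosSemidef) (hric : X * A⁻¹ * X = B) : X = geomMean A B := by
  set S := msqrt A with hSdef
  have hS : S.PosDef := msqrt_posDef hA
  have hSS : S * S = A := msqrt_mul_self hA
  have hSdet : IsUnit S.det := (Matrix.isUnit_iff_isUnit_det S).mp hS.isUnit
  have hSinvH : S⁻¹ᴴ = S⁻¹ := by rw [Matrix.conjTranspose_nonsing_inv, hS.isHermitian.eq]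
  have hSiS : S⁻¹ * S = 1 := Matrix.nonsing_inv_mul S hSdet
  have hSSi : S * S⁻¹ = 1 := Matrix.mul_nonsing_inv S hSdet
  have hAinv : A⁻¹ = S⁻¹ * S⁻¹ := by rw [← hSS, Matrix.mul_inv_rev]
  set M := S⁻¹ * B * S⁻¹ with hMdef
  have hM : M.PosDef := by
    have := posDef_conj_of_isUnit hB (hS.inv.isUnit)
    rwa [hSinvH] at this
  -- Y := S⁻¹ X S⁻¹ is psd with Y² = M
  set Y := S⁻¹ * X * S⁻¹ with hYdef
  have hY : Y.PosSemidef := by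
    have := hX.conjTranspose_mul_mul_same S⁻¹
    rwa [hSinvH] at this
  have hYsq : Y ^ 2 = M := by
    rw [pow_two, hYdef, hMdef, ← hric, hAinv]
    noncomm_ring
  have hYeq : Y = CFC.sqrt M := (CFC.sqrt_unique (by rw [← pow_two]; exact hYsq) hY.nonneg).symm
  have hT : msqrt M = CFC.sqrt M := msqrt_of_posDef hM
  have hXY : X = S * Y * S := by
    rw [hYdef]
    calc X = (S * S⁻¹) * X * (S⁻¹ * S) := by rw [hSSi, hSiS]; noncomm_ring
    _ = S * (S⁻¹ * X * S⁻¹) * S := by noncomm_ring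
  rw [hXY, hYeq, ← hT]
  rfl

lemma geomMean_eq_self {A B : Matrix n n ℂ} (hA : A.PosDef) (hB : B.PosDef) :
    ∃ G : Matrix n n ℂ, G = geomMean A B ∧ G.PosDef ∧ G * A⁻¹ * G = B := by
  set S := msqrt A with hSdef
  have hS : S.PosDef := msqrt_posDef hA
  have hSS : S * S = A := msqrt_mul_self hA
  have hSdet : IsUnit S.det := (Matrix.isUnit_iff_isUnit_det S).mp hS.isUnit
  have hSinvH : S⁻¹ᴴ = S⁻¹ := by rw [Matrix.conjTranspose_nonsing_inv, hS.isHermitian.eq]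
  have hSiS : S⁻¹ * S = 1 := Matrix.nonsing_inv_mul S hSdet
  have hSSi : S * S⁻¹ = 1 := Matrix.mul_nonsing_inv S hSdet
  have hAinv : A⁻¹ = S⁻¹ * S⁻¹ := by rw [← hSS, Matrix.mul_inv_rev]
  set M := S⁻¹ * B * S⁻¹ with hMdef
  have hM : M.PosDef := by
    have := posDef_conj_of_isUnit hB (hS.inv.isUnit)
    rwa [hSinvH] at this
  set T := msqrt M with hTdef
  have hT : T.PosDef := msqrt_posDef hM
  have hTT : T * T = M := msqrt_mul_self hM
  refine ⟨S * T * S, rfl, ?_, ?_⟩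
  · have := posDef_conj_of_isUnit hT hS.isUnit
    rwa [hS.isHermitian.eq] at this
  · calc S * T * S * A⁻¹ * (S * T * S)
        = S * T * (S * S⁻¹) * (S⁻¹ * S) * T * S := by rw [hAinv]; noncomm_ring
      _ = S * (T * T) * S := by rw [hSSi, hSiS]; noncomm_ring
      _ = S * (S⁻¹ * B * S⁻¹) * S := by rw [hTT]
      _ = (S * S⁻¹) * B * (S⁻¹ * S) := by noncomm_ring
      _ = B := by rw [hSSi, hSiS, Matrix.one_mul, Matrix.mul_one]

end Helpers

/-- Congruence invariance of the geometric mean. -/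
theorem geomMean_congruence {n : Type*} [Fintype n] [DecidableEq n]
    (A B C : Matrix n n ℂ) (hA : A.PosDef) (hB : B.PosDef) (hC : IsUnit C) :
    Cᴴ * geomMean A B * C = geomMean (Cᴴ * A * C) (Cᴴ * B * C) := by
  obtain ⟨G, hGeq, hG, hGric⟩ := geomMean_eq_self hA hB
  have hA' := posDef_conj_of_isUnit hA hC
  have hB' := posDef_conj_of_isUnit hB hC
  have hX : (Cᴴ * G * C).PosSemidef := (posDef_conj_of_isUnit hG hC).posSemidef
  have hCdet : IsUnit C.det := (Matrix.isUnit_iff_isUnit_det C).mp hC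
  have hCH : IsUnit Cᴴ.det := by rw [Matrix.det_conjTranspose]; exact hCdet.star
  have h1 : C * C⁻¹ = 1 := Matrix.mul_nonsing_inv C hCdet
  have h2 : Cᴴ⁻¹ * Cᴴ = 1 := Matrix.nonsing_inv_mul _ hCH
  have hinv : (Cᴴ * A * C)⁻¹ = C⁻¹ * (A⁻¹ * Cᴴ⁻¹) := by
    rw [Matrix.mul_inv_rev, Matrix.mul_inv_rev]
  have hric : (Cᴴ * G * C) * (Cᴴ * A * C)⁻¹ * (Cᴴ * G * C) = Cᴴ * B * C := by
    rw [hinv, ← hGric]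
    calc Cᴴ * G * C * (C⁻¹ * (A⁻¹ * Cᴴ⁻¹)) * (Cᴴ * G * C)
        = Cᴴ * G * (C * C⁻¹) * A⁻¹ * (Cᴴ⁻¹ * Cᴴ) * G * C := by noncomm_ring
      _ = Cᴴ * (G * A⁻¹ * G) * C := by rw [h1, h2]; noncomm_ring
  rw [← hGeq]
  exact eq_geomMean hA' hB' hX hric
end

section
/- Let Φ be a completely positive linear map between matrix algebras and G the matrix geometric mean. Then Φ(G(A,B)) ≤ G(Φ(A), Φ(B)) for positive definite A, B such that Φ(A), Φ(B) are positive definite. -/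
open Matrix
open scoped ComplexOrder Classical

/-- Square root of a positive semidefinite matrix (replacement for the removed Mathlib one). -/
noncomputable def Matrix.PosSemidef.sqrt {n : Type*} [Fintype n] [DecidableEq n]
    {A : Matrix n n ℂ} (h : A.PosSemidef) : Matrix n n ℂ :=
  (h.1.eigenvectorUnitary : Matrix n n ℂ) * diagonal ((↑) ∘ Real.sqrt ∘ h.1.eigenvalues) *
    (star h.1.eigenvectorUnitary : Matrix n n ℂ)

theorem Matrix.PosSemidef.posSemidef_sqrt {n : Type*} [Fintype n] [DecidableEq n]
    {A : Matrix n n ℂ} (h : A.PosSemidef) : h.sqrt.PosSemidef := by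
  have hd : (diagonal ((↑) ∘ Real.sqrt ∘ h.1.eigenvalues : n → ℂ)).PosSemidef :=
    Matrix.PosSemidef.diagonal (fun i => Complex.zero_le_real.mpr (Real.sqrt_nonneg _))
  have := hd.mul_mul_conjTranspose_same (h.1.eigenvectorUnitary : Matrix n n ℂ)
  rwa [← Matrix.star_eq_conjTranspose] at this

theorem Matrix.PosSemidef.sqrt_mul_self {n : Type*} [Fintype n] [DecidableEq n]
    {A : Matrix n n ℂ} (h : A.PosSemidef) : h.sqrt * h.sqrt = A := by
  have hD : diagonal ((↑) ∘ Real.sqrt ∘ h.1.eigenvalues : n → ℂ) *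
      diagonal ((↑) ∘ Real.sqrt ∘ h.1.eigenvalues) =
      diagonal (RCLike.ofReal ∘ h.1.eigenvalues) := by
    rw [diagonal_mul_diagonal]
    congr 1
    funext i
    simp only [Function.comp_apply, ← Complex.ofReal_mul,
      Real.mul_self_sqrt (h.eigenvalues_nonneg i)]
    rfl
  conv_rhs => rw [h.1.spectral_theorem, Unitary.conjStarAlgAut_apply]
  simp only [Matrix.PosSemidef.sqrt, Matrix.mul_assoc]
  rw [← Matrix.mul_assoc (star _ : Matrix n n ℂ) _ _, Unitary.coe_star_mul_self, Matrix.one_mul,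
    ← Matrix.mul_assoc _ _ (star _ : Matrix n n ℂ), hD]

section Aux

variable {n : Type*} [Fintype n] [DecidableEq n]

lemma my_dot_self_pos {v : n → ℂ} (hv : v ≠ 0) : 0 < star v ⬝ᵥ v := by
  simpa using (Matrix.PosDef.one (n := n) (R := ℂ)).dotProduct_mulVec_pos hv

omit [DecidableEq n] in
lemma herm_dot {T : Matrix n n ℂ} (hT : T.IsHermitian) (v : n → ℂ) :
    star v ⬝ᵥ (T * T) *ᵥ v = star (T *ᵥ v) ⬝ᵥ (T *ᵥ v) := by
  rw [star_mulVec, hT.eq, ← dotProduct_mulVec, mulVec_mulVec]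

/-- Operator monotonicity of the square root (special case). -/
lemma sqrt_mono {T M : Matrix n n ℂ} (hT : T.PosSemidef) (hM : M.PosDef)
    (h : (M - T * T).PosSemidef) : (hM.posSemidef.sqrt - T).PosSemidef := by
  set S := hM.posSemidef.sqrt with hSdef
  have hS : S.PosSemidef := hM.posSemidef.posSemidef_sqrt
  have hSS : S * S = M := hM.posSemidef.sqrt_mul_self
  have hD : (S - T).IsHermitian := hS.isHermitian.sub hT.isHermitian
  apply hD.posSemidef_iff_eigenvalues_nonneg.mpr
  intro i
  by_contra hneg
  push_neg at hneg
  set lam := hD.eigenvalues i with hlam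
  set v : n → ℂ := ⇑(hD.eigenvectorBasis i) with hv
  have hv0 : v ≠ 0 := by
    intro h0
    have := (hD.eigenvectorBasis).orthonormal.1 i
    rw [show (hD.eigenvectorBasis i) = 0 from by ext j; exact congrFun h0 j] at this
    simp at this
  have heig : S *ᵥ v - T *ᵥ v = (lam : ℂ) • v := by
    rw [← Matrix.sub_mulVec]
    simpa [hv, RCLike.real_smul_eq_coe_smul] using hD.mulVec_eigenvectorBasis i
  have hTv : T *ᵥ v = S *ᵥ v - (lam : ℂ) • v := by
    rw [← heig]; exact (sub_sub_cancel _ _).symm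
  have hkey : star v ⬝ᵥ (T * T) *ᵥ v ≤ star v ⬝ᵥ M *ᵥ v := by
    have := h.dotProduct_mulVec_nonneg v
    rw [Matrix.sub_mulVec, dotProduct_sub] at this
    exact sub_nonneg.mp this
  set w := S *ᵥ v with hw
  set c : ℂ := (lam : ℂ) with hc
  have hstarc : star c = c := by simp [hc, Complex.star_def, Complex.conj_ofReal]
  have hr : 0 ≤ star v ⬝ᵥ w := hS.dotProduct_mulVec_nonneg v
  set r := star v ⬝ᵥ w with hrdef
  have hrstar : star w ⬝ᵥ v = r := by
    have h1 : star r = star w ⬝ᵥ v := by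
      rw [hrdef, star_dotProduct, star_star, dotProduct_comm]
    rw [← h1, (IsSelfAdjoint.of_nonneg hr).star_eq]
  set p := star v ⬝ᵥ v with hp
  have hppos : 0 < p := my_dot_self_pos hv0
  set q := star w ⬝ᵥ w with hq
  have hL : star v ⬝ᵥ (T * T) *ᵥ v = q - c * r - c * r + c * c * p := by
    rw [herm_dot hT.isHermitian, hTv]
    rw [star_sub, star_smul, hstarc]
    simp only [dotProduct_sub, sub_dotProduct, smul_dotProduct, dotProduct_smul,
      smul_eq_mul, ← hrdef, hrstar, ← hp, ← hq]
    ring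
  have hR : star v ⬝ᵥ M *ᵥ v = q := by
    rw [← hSS, herm_dot hS.isHermitian, ← hw, hq]
  rw [hL, hR] at hkey
  have hcneg : c < 0 := by rw [hc]; exact_mod_cast hneg
  have h2 : 0 ≤ c * (2 * r - c * p) := by
    have := sub_nonneg.mpr hkey
    calc (0:ℂ) ≤ q - (q - c * r - c * r + c * c * p) := this
    _ = c * (2 * r - c * p) := by ring
  have h3 : 0 < 2 * r - c * p := by
    have h5 : 0 < -(c * p) := neg_pos.mpr (mul_neg_of_neg_of_pos hcneg hppos)
    have h4 : (0:ℂ) ≤ 2 * r := by positivity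
    rw [sub_eq_add_neg]
    exact add_pos_of_nonneg_of_pos h4 h5
  have h6 := mul_neg_of_neg_of_pos hcneg h3
  exact absurd (h2.trans_lt h6) (lt_irrefl 0)

lemma posDef_sqrt {M : Matrix n n ℂ} (hM : M.PosDef) : hM.posSemidef.sqrt.PosDef := by
  set S := hM.posSemidef.sqrt with hSdef
  have hS : S.PosSemidef := hM.posSemidef.posSemidef_sqrt
  refine .of_dotProduct_mulVec_pos hS.isHermitian (fun x hx => ?_)
  rcases (hS.dotProduct_mulVec_nonneg x).lt_or_eq with h | h
  · exact h
  · exfalso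
    have h0 : S *ᵥ x = 0 := (hS.dotProduct_mulVec_zero_iff x).mp h.symm
    have : M *ᵥ x = 0 := by
      rw [← hM.posSemidef.sqrt_mul_self, ← hSdef, ← mulVec_mulVec, h0, mulVec_zero]
    have h2 := hM.dotProduct_mulVec_pos hx
    rw [this, dotProduct_zero] at h2
    exact lt_irrefl 0 h2

lemma posDef_conj {M : Matrix n n ℂ} (hM : M.PosDef) {C : Matrix n n ℂ}
    (hC : IsUnit C.det) : (Cᴴ * M * C).PosDef := by
  refine .of_dotProduct_mulVec_pos
    (by simpa [Matrix.mul_assoc] using isHermitian_conjTranspose_mul_mul C hM.isHermitian)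
    (fun x hx => ?_)
  have hCx : C *ᵥ x ≠ 0 := by
    intro h0
    apply hx
    have := congrArg (fun v => C⁻¹ *ᵥ v) h0
    simpa [mulVec_mulVec, Matrix.nonsing_inv_mul C hC] using this
  have h2 := hM.dotProduct_mulVec_pos hCx
  have he : star x ⬝ᵥ (Cᴴ * M * C) *ᵥ x = star (C *ᵥ x) ⬝ᵥ M *ᵥ (C *ᵥ x) := by
    rw [← mulVec_mulVec, ← mulVec_mulVec, star_mulVec, ← dotProduct_mulVec, dotProduct_mulVec]
  rw [he]
  exact h2

omit [DecidableEq n] in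
lemma posSemidef_sum {ι : Type*} (s : Finset ι) (f : ι → Matrix n n ℂ)
    (h : ∀ i ∈ s, (f i).PosSemidef) : (∑ i ∈ s, f i).PosSemidef :=
  Finset.sum_induction f _ (fun _ _ ha hb => ha.add hb) Matrix.PosSemidef.zero h

lemma fromBlocks_sum {ι m : Type*} [Fintype m] (s : Finset ι)
    (f g h k : ι → Matrix m m ℂ) :
    Matrix.fromBlocks (∑ i ∈ s, f i) (∑ i ∈ s, g i) (∑ i ∈ s, h i) (∑ i ∈ s, k i)
      = ∑ i ∈ s, Matrix.fromBlocks (f i) (g i) (h i) (k i) := by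
  ext x y
  cases x <;> cases y <;> simp [Matrix.sum_apply]

omit [Fintype n] [DecidableEq n] in
lemma conj_sub_identity {R : Type*} [Ring R] (a q g : R) :
    a * q * a - (a * g * a) * (a * g * a) = a * (q - g * (a * a) * g) * a := by
  noncomm_ring

/-- Facts about `msqrt` of a positive definite matrix. -/
lemma msqrt_facts {A : Matrix n n ℂ} (hA : A.PosDef) :
    (msqrt A).PosDef ∧ msqrt A * msqrt A = A ∧ ((msqrt A)⁻¹)ᴴ = (msqrt A)⁻¹ ∧
      IsUnit (msqrt A).det ∧ A⁻¹ = (msqrt A)⁻¹ * (msqrt A)⁻¹ := by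
  have hdef : msqrt A = hA.posSemidef.sqrt := dif_pos hA.posSemidef
  have hpd : (msqrt A).PosDef := hdef ▸ posDef_sqrt hA
  have hmul : msqrt A * msqrt A = A := by rw [hdef]; exact hA.posSemidef.sqrt_mul_self
  have hdet : IsUnit (msqrt A).det := isUnit_iff_ne_zero.mpr hpd.det_pos.ne'
  refine ⟨hpd, hmul, hpd.isHermitian.inv, hdet, ?_⟩
  calc A⁻¹ = (msqrt A * msqrt A)⁻¹ := by rw [hmul]
  _ = (msqrt A)⁻¹ * (msqrt A)⁻¹ := Matrix.mul_inv_rev _ _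

end Aux

/-- Ando's inequality: `Φ(G(A,B)) ≤ G(Φ(A), Φ(B))` for a completely positive map `Φ`. -/
theorem cp_geomMean {n m : Type*} [Fintype n] [DecidableEq n] [Fintype m] [DecidableEq m]
    (Φ : Matrix n n ℂ → Matrix m m ℂ) (hΦ : IsCPMap Φ)
    (A B : Matrix n n ℂ) (hA : A.PosDef) (hB : B.PosDef)
    (hΦA : (Φ A).PosDef) (hΦB : (Φ B).PosDef) :
    (geomMean (Φ A) (Φ B) - Φ (geomMean A B)).PosSemidef := by
  obtain ⟨r, C, hC⟩ := hΦ
  -- Part 1 : facts about G := geomMean A B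
  obtain ⟨hSpd, hSS, hSinvherm, hSdet, hAinv⟩ := msqrt_facts hA
  set S := msqrt A with hSdef
  have hSherm : Sᴴ = S := hSpd.isHermitian
  have hInner : (S⁻¹ * B * S⁻¹).PosDef := by
    have := posDef_conj hB (Matrix.isUnit_nonsing_inv_det S hSdet)
    rwa [hSinvherm] at this
  have hWdef : msqrt (S⁻¹ * B * S⁻¹) = hInner.posSemidef.sqrt := dif_pos hInner.posSemidef
  set W := msqrt (S⁻¹ * B * S⁻¹) with hWdef2
  have hWps : W.PosSemidef := hWdef ▸ hInner.posSemidef.posSemidef_sqrt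
  have hWW : W * W = S⁻¹ * B * S⁻¹ := by rw [hWdef]; exact hInner.posSemidef.sqrt_mul_self
  have hG : geomMean A B = S * W * S := rfl
  set G := geomMean A B with hGdef
  have hGps : G.PosSemidef := by
    have h1 : G = Sᴴ * W * S := by rw [hG, hSherm]
    rw [h1]
    exact hWps.conjTranspose_mul_mul_same S
  have hGherm : Gᴴ = G := hGps.isHermitian
  have hGAG : G * A⁻¹ * G = B := by
    rw [hG, hAinv]
    simp only [Matrix.mul_assoc]
    rw [Matrix.nonsing_inv_mul_cancel_left S _ hSdet,
        Matrix.mul_nonsing_inv_cancel_left S _ hSdet,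
        ← Matrix.mul_assoc W W S, hWW]
    simp only [Matrix.mul_assoc]
    rw [Matrix.mul_nonsing_inv_cancel_left S _ hSdet,
        Matrix.nonsing_inv_mul S hSdet, Matrix.mul_one]
  -- Part 2 : block positivity and its image under Φ
  haveI : Invertible A := A.invertibleOfIsUnitDet (isUnit_iff_ne_zero.mpr hA.det_pos.ne')
  have hblock : (Matrix.fromBlocks A G Gᴴ B).PosSemidef := by
    rw [Matrix.PosDef.fromBlocks₁₁ _ _ hA, hGherm, hGAG, sub_self]
    exact Matrix.PosSemidef.zero
  rw [hGherm] at hblock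
  have hbΦ : (Matrix.fromBlocks (Φ A) (Φ G) (Φ G) (Φ B)).PosSemidef := by
    rw [hC A, hC G, hC B, fromBlocks_sum]
    apply _root_.posSemidef_sum
    intro i _
    have heq : Matrix.fromBlocks ((C i)ᴴ * A * C i) ((C i)ᴴ * G * C i)
        ((C i)ᴴ * G * C i) ((C i)ᴴ * B * C i)
        = (Matrix.fromBlocks (C i) 0 0 (C i))ᴴ * Matrix.fromBlocks A G G B *
          Matrix.fromBlocks (C i) 0 0 (C i) := by
      simp [Matrix.fromBlocks_conjTranspose, Matrix.fromBlocks_multiply]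
    rw [heq]
    exact hblock.conjTranspose_mul_mul_same _
  have hΦGherm : (Φ G)ᴴ = Φ G := by
    rw [hC G]
    rw [Matrix.conjTranspose_sum]
    congr 1
    funext i
    rw [Matrix.conjTranspose_mul, Matrix.conjTranspose_mul, Matrix.conjTranspose_conjTranspose,
      hGherm, Matrix.mul_assoc]
  have hΦGps : (Φ G).PosSemidef := by
    rw [hC G]
    exact _root_.posSemidef_sum _ _ (fun i _ => hGps.conjTranspose_mul_mul_same (C i))
  -- Part 3 : Schur complement in the image
  haveI : Invertible (Φ A) := (Φ A).invertibleOfIsUnitDet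
    (isUnit_iff_ne_zero.mpr hΦA.det_pos.ne')
  have hschur : (Φ B - Φ G * (Φ A)⁻¹ * Φ G).PosSemidef := by
    have := (Matrix.PosDef.fromBlocks₁₁ (Φ G) (Φ B) hΦA).mp (by rwa [hΦGherm])
    rwa [hΦGherm] at this
  -- Part 4 : conclude via monotonicity of the square root
  obtain ⟨hPpd, hPP, hPinvherm, hPdet, hPinv⟩ := msqrt_facts hΦA
  set Sp := msqrt (Φ A) with hSpdef
  have hSpherm : Spᴴ = Sp := hPpd.isHermitian
  have hM' : (Sp⁻¹ * Φ B * Sp⁻¹).PosDef := by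
    have := posDef_conj hΦB (Matrix.isUnit_nonsing_inv_det Sp hPdet)
    rwa [hPinvherm] at this
  set T := Sp⁻¹ * Φ G * Sp⁻¹ with hTdef
  have hTps : T.PosSemidef := by
    have h1 := hΦGps.conjTranspose_mul_mul_same Sp⁻¹
    rw [hPinvherm] at h1
    rw [hTdef]
    exact h1
  have hMT : (Sp⁻¹ * Φ B * Sp⁻¹ - T * T).PosSemidef := by
    have heq : Sp⁻¹ * Φ B * Sp⁻¹ - T * T
        = Sp⁻¹ * (Φ B - Φ G * (Φ A)⁻¹ * Φ G) * Sp⁻¹ := by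
      rw [hTdef, hPinv]
      exact conj_sub_identity _ _ _
    have h1 := hschur.conjTranspose_mul_mul_same Sp⁻¹
    rw [hPinvherm] at h1
    rw [heq]
    exact h1
  have hmono := sqrt_mono hTps hM' hMT
  have hfinal := hmono.conjTranspose_mul_mul_same Sp
  rw [hSpherm] at hfinal
  have heq2 : Sp * (hM'.posSemidef.sqrt - T) * Sp = geomMean (Φ A) (Φ B) - Φ G := by
    rw [Matrix.mul_sub, Matrix.sub_mul]
    congr 1
    · have : msqrt (Sp⁻¹ * Φ B * Sp⁻¹) = hM'.posSemidef.sqrt := dif_pos hM'.posSemidef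
      rw [geomMean, ← hSpdef, this]
    · rw [hTdef]
      simp only [Matrix.mul_assoc]
      rw [Matrix.mul_nonsing_inv_cancel_left Sp _ hPdet]
      rw [Matrix.nonsing_inv_mul Sp hPdet, Matrix.mul_one]
  rw [heq2] at hfinal
  exact hfinal
end
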